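/- arXiv:2002.06262 — 2 statements merged into one kernel-verified Lean document; each statement's English description precedes it below -/
import Mathlib

section
/- For any 2×2 positive semidefinite matrix Σ with diagonal entries a = Σ₁₁ > 0 and c = Σ₂₂ > 0, the dual kernel of the normalized ReLU σ(z)=√2 max(0,z) satisfies ψ_σ(Σ) := E_{(X,X̃)~N(0,Σ)}[σ(X)σ(X̃)] = √(ac)·σ̂(b/√(ac)), where b = Σ₁₂ and σ̂(ρ) = (√(1-ρ²)+(π-arccos ρ)ρ)/π. -/
open MeasureTheory ProbabilityTheory Real
open Set Filter
open scoped NNReal ENNReal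

/-- Normalized ReLU: σ(z) = √2 · max(0,z). -/
noncomputable def nrelu (z : ℝ) : ℝ := Real.sqrt 2 * max 0 z

/-- Dual activation of the normalized ReLU. -/
noncomputable def hatSigma (ρ : ℝ) : ℝ :=
  (Real.sqrt (1 - ρ ^ 2) + (π - Real.arccos ρ) * ρ) / π

/-- Product of two standard Gaussians on ℝ². A bivariate centered Gaussian with
covariance ((a,b),(b,c)) is represented as (√a·z₁, √c·(ρz₁ + √(1-ρ²)z₂)),
where ρ = b/√(ac). -/
noncomputable def stdGauss2 : Measure (ℝ × ℝ) :=
  (gaussianReal 0 1).prod (gaussianReal 0 1)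

lemma gaussianPDFReal_zero_one (x : ℝ) :
    gaussianPDFReal 0 1 x = (Real.sqrt (2 * π))⁻¹ * Real.exp (-(x ^ 2) / 2) := by
  simp [gaussianPDFReal]

lemma stdGauss2_eq :
    stdGauss2 = volume.withDensity
      (fun p : ℝ × ℝ => gaussianPDF 0 1 p.1 * gaussianPDF 0 1 p.2) := by
  rw [stdGauss2]
  refine Measure.prod_eq fun s t hs ht => ?_
  rw [gaussianReal_of_var_ne_zero _ one_ne_zero,withDensity_apply _ (hs.prod ht), Measure.volume_eq_prod, ← Measure.prod_restrict,
    lintegral_prod_mul (measurable_gaussianPDF 0 1).aemeasurable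
      (measurable_gaussianPDF 0 1).aemeasurable,
    withDensity_apply _ hs, withDensity_apply _ ht]

lemma integral_stdGauss2 (G : ℝ × ℝ → ℝ) :
    ∫ p, G p ∂stdGauss2
      = ∫ p : ℝ × ℝ, (gaussianPDFReal 0 1 p.1 * gaussianPDFReal 0 1 p.2) * G p := by
  rw [stdGauss2_eq]
  have h1 : (fun p : ℝ × ℝ => gaussianPDF 0 1 p.1 * gaussianPDF 0 1 p.2)
      = fun p : ℝ × ℝ => (((gaussianPDFReal 0 1 p.1).toNNReal
          * (gaussianPDFReal 0 1 p.2).toNNReal : ℝ≥0) : ℝ≥0∞) := by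
    funext p
    simp [gaussianPDF, ENNReal.ofReal]
  have hmeas : Measurable fun p : ℝ × ℝ =>
      ((gaussianPDFReal 0 1 p.1).toNNReal * (gaussianPDFReal 0 1 p.2).toNNReal : ℝ≥0) :=
    (((measurable_gaussianPDFReal 0 1).comp measurable_fst).real_toNNReal.mul
      ((measurable_gaussianPDFReal 0 1).comp measurable_snd).real_toNNReal)
  rw [h1, integral_withDensity_eq_integral_smul hmeas G]
  congr 1; funext p
  rw [NNReal.smul_def, NNReal.coe_mul, smul_eq_mul,
    Real.coe_toNNReal _ (gaussianPDFReal_nonneg _ _ _),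
    Real.coe_toNNReal _ (gaussianPDFReal_nonneg _ _ _)]

lemma radial_int : ∫ r in Ioi (0:ℝ), r ^ 3 * Real.exp (-(r ^ 2) / 2) = 2 := by
  have hderiv : ∀ x ∈ Ioi (0:ℝ),
      HasDerivAt (fun r : ℝ => -((r ^ 2 + 2) * Real.exp (-(r ^ 2) / 2)))
        (x ^ 3 * Real.exp (-(x ^ 2) / 2)) x := by
    intro x _
    have h1 : HasDerivAt (fun r : ℝ => r ^ 2 + 2) (2 * x) x := by
      simpa using (hasDerivAt_pow 2 x).add_const 2
    have h2 : HasDerivAt (fun r : ℝ => -(r ^ 2) / 2) (-x) x := by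
      have := ((hasDerivAt_pow 2 x).neg).div_const 2
      refine this.congr_deriv ?_
      ring
    have h3 : HasDerivAt (fun r : ℝ => Real.exp (-(r ^ 2) / 2))
        (Real.exp (-(x ^ 2) / 2) * (-x)) x := h2.exp
    have := (h1.mul h3).neg
    refine this.congr_deriv ?_
    ring
  have hint : IntegrableOn (fun r : ℝ => r ^ 3 * Real.exp (-(r ^ 2) / 2)) (Ioi 0) := by
    have h := integrableOn_rpow_mul_exp_neg_mul_sq (b := 1/2) (by norm_num) (s := 3) (by norm_num)
    refine h.congr_fun (fun x _ => ?_) measurableSet_Ioi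
    dsimp only
    rw [show ((3:ℝ)) = ((3:ℕ):ℝ) by norm_num, Real.rpow_natCast,
      show (-(1/2:ℝ) * x ^ 2) = -(x ^ 2)/2 by ring]
  have htends : Tendsto (fun r : ℝ => -((r ^ 2 + 2) * Real.exp (-(r ^ 2) / 2))) atTop (nhds 0) := by
    have hu : Tendsto (fun r : ℝ => r ^ 2 / 2) atTop atTop :=
      (tendsto_pow_atTop two_ne_zero).atTop_div_const (by norm_num)
    have hg : Tendsto (fun u : ℝ => (2 * u + 2) * Real.exp (-u)) atTop (nhds 0) := by
      have h := ((tendsto_pow_mul_exp_neg_atTop_nhds_zero 1).const_mul (2:ℝ)).add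
        (Real.tendsto_exp_neg_atTop_nhds_zero.const_mul (2:ℝ))
      simp only [pow_one, mul_zero, add_zero] at h
      exact h.congr fun u => by ring
    have := (hg.comp hu).congr fun r => by
      show (2 * (r ^ 2 / 2) + 2) * Real.exp (-(r ^ 2 / 2)) = (r ^ 2 + 2) * Real.exp (-(r ^ 2) / 2)
      rw [show -(r ^ 2 / 2) = -(r ^ 2) / 2 by ring]
      ring
    simpa using this.neg
  have hcont : ContinuousWithinAt (fun r : ℝ => -((r ^ 2 + 2) * Real.exp (-(r ^ 2) / 2)))
      (Ici 0) 0 := (Continuous.continuousWithinAt (by fun_prop))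
  have h := integral_Ioi_of_hasDerivAt_of_tendsto hcont hderiv hint htends
  rw [h]
  norm_num

lemma cos_prod_id (α θ : ℝ) :
    Real.cos α + Real.cos (2 * θ - α) = 2 * Real.cos θ * Real.cos (θ - α) := by
  have h1 := Real.cos_sub θ (θ - α)
  have h2 := Real.cos_add θ (θ - α)
  rw [show θ - (θ - α) = α by ring] at h1
  rw [show θ + (θ - α) = 2 * θ - α by ring] at h2
  nlinarith [h1, h2]

lemma angular_int (α : ℝ) (hα0 : 0 ≤ α) (hαπ : α ≤ π) :
    ∫ θ in Ioo (-π) π, 2 * max 0 (Real.cos θ) * max 0 (Real.cos (θ - α))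
      = Real.sin α + (π - α) * Real.cos α := by
  have hle : α - π / 2 ≤ π / 2 := by linarith
  have hsub : Ioo (α - π / 2) (π / 2) ⊆ Ioo (-π) π := by
    intro x hx
    have h1 := hx.1; have h2 := hx.2
    constructor <;> [linarith [pi_pos]; linarith [pi_pos]]
  have hEq : EqOn (fun θ => 2 * max 0 (Real.cos θ) * max 0 (Real.cos (θ - α)))
      ((Ioo (α - π / 2) (π / 2)).indicator
        (fun θ => 2 * Real.cos θ * Real.cos (θ - α))) (Ioo (-π) π) := by
    intro θ hθ
    by_cases h : θ ∈ Ioo (α - π / 2) (π / 2)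
    · rw [indicator_of_mem h]
      have h1 : 0 ≤ Real.cos θ :=
        Real.cos_nonneg_of_mem_Icc ⟨by linarith [h.1], h.2.le⟩
      have h2 : 0 ≤ Real.cos (θ - α) :=
        Real.cos_nonneg_of_mem_Icc ⟨by linarith [h.1], by linarith [h.2]⟩
      simp only [max_eq_right h1, max_eq_right h2]
    · rw [indicator_of_notMem h]
      rcases le_or_gt (Real.cos θ) 0 with hc | hc
      · simp only [max_eq_left hc, mul_zero, zero_mul]
      · have hθ2 : θ < π / 2 := by
          by_contra hge; push_neg at hge
          have : Real.cos θ ≤ 0 :=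
            Real.cos_nonpos_of_pi_div_two_le_of_le hge (by linarith [hθ.2, pi_pos])
          linarith
        have hθ1 : -(π / 2) < θ := by
          by_contra hge; push_neg at hge
          have : Real.cos (-θ) ≤ 0 :=
            Real.cos_nonpos_of_pi_div_two_le_of_le (by linarith) (by linarith [hθ.1, pi_pos])
          rw [Real.cos_neg] at this
          linarith
        have hle2 : θ ≤ α - π / 2 := by
          by_contra hgt; push_neg at hgt
          exact h ⟨hgt, hθ2⟩
        have hc2 : Real.cos (θ - α) ≤ 0 := by
          rw [← Real.cos_neg, neg_sub]
          exact Real.cos_nonpos_of_pi_div_two_le_of_le (by linarith) (by linarith)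
        simp only [max_eq_left hc2, mul_zero]
  rw [setIntegral_congr_fun measurableSet_Ioo hEq,
    setIntegral_indicator measurableSet_Ioo,
    inter_eq_self_of_subset_right hsub,
    ← integral_Ioc_eq_integral_Ioo, ← intervalIntegral.integral_of_le hle]
  have hderiv : ∀ θ ∈ uIcc (α - π / 2) (π / 2),
      HasDerivAt (fun θ : ℝ => θ * Real.cos α + Real.sin (2 * θ - α) / 2)
        (2 * Real.cos θ * Real.cos (θ - α)) θ := by
    intro θ _
    have h1 : HasDerivAt (fun θ : ℝ => θ * Real.cos α) (Real.cos α) θ := by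
      simpa using (hasDerivAt_id θ).mul_const (Real.cos α)
    have h2 : HasDerivAt (fun θ : ℝ => 2 * θ - α) 2 θ := by
      simpa using ((hasDerivAt_id θ).const_mul (2:ℝ)).sub_const α
    have h3 := (h2.sin).div_const 2
    have := h1.add h3
    refine this.congr_deriv ?_
    rw [← cos_prod_id α θ]
    ring
  rw [intervalIntegral.integral_eq_sub_of_hasDerivAt hderiv
    ((Continuous.intervalIntegrable (by fun_prop) _ _))]
  rw [show 2 * (π / 2) - α = π - α by ring, show 2 * (α - π / 2) - α = -(π - α) by ring,
    Real.sin_neg, Real.sin_pi_sub]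
  ring

lemma key_integral (ρ : ℝ) (h1 : -1 ≤ ρ) (h2 : ρ ≤ 1) :
    ∫ p : ℝ × ℝ, nrelu p.1 * nrelu (ρ * p.1 + Real.sqrt (1 - ρ ^ 2) * p.2) ∂stdGauss2
      = (Real.sqrt (1 - ρ ^ 2) + (π - Real.arccos ρ) * ρ) / π := by
  set α := Real.arccos ρ with hα
  have hcos : Real.cos α = ρ := Real.cos_arccos h1 h2
  have hsin : Real.sin α = Real.sqrt (1 - ρ ^ 2) := Real.sin_arccos ρ
  have hα0 : 0 ≤ α := Real.arccos_nonneg ρ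
  have hαπ : α ≤ π := Real.arccos_le_pi ρ
  rw [integral_stdGauss2]
  have hH : ∀ p : ℝ × ℝ, (gaussianPDFReal 0 1 p.1 * gaussianPDFReal 0 1 p.2) *
      (nrelu p.1 * nrelu (ρ * p.1 + Real.sqrt (1 - ρ ^ 2) * p.2))
      = (2 * π)⁻¹ * Real.exp (-(p.1 ^ 2 + p.2 ^ 2) / 2) *
        (2 * max 0 p.1 * max 0 (ρ * p.1 + Real.sqrt (1 - ρ ^ 2) * p.2)) := by
    intro p
    simp only [nrelu, gaussianPDFReal_zero_one]
    have e1 : Real.sqrt (2 * π) * Real.sqrt (2 * π) = 2 * π :=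
      Real.mul_self_sqrt (by positivity)
    have e2 : Real.sqrt 2 * Real.sqrt 2 = 2 := Real.mul_self_sqrt (by norm_num)
    have e3 : Real.exp (-(p.1 ^ 2) / 2) * Real.exp (-(p.2 ^ 2) / 2)
        = Real.exp (-(p.1 ^ 2 + p.2 ^ 2) / 2) := by
      rw [← Real.exp_add]; ring_nf
    have e4 : ((2 * π)⁻¹ : ℝ) = (Real.sqrt (2 * π))⁻¹ * (Real.sqrt (2 * π))⁻¹ := by
      rw [← mul_inv, e1]
    rw [e4, ← e3]
    linear_combination ((Real.sqrt (2 * π))⁻¹ * (Real.sqrt (2 * π))⁻¹ *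
      Real.exp (-(p.1 ^ 2) / 2) * Real.exp (-(p.2 ^ 2) / 2) * max 0 p.1 *
      max 0 (ρ * p.1 + Real.sqrt (1 - ρ ^ 2) * p.2)) * e2
  simp_rw [hH]
  rw [← integral_comp_polarCoord_symm]
  have htar : MeasurableSet polarCoord.target :=
    polarCoord.open_target.measurableSet
  have hEq : EqOn (fun p : ℝ × ℝ => p.1 •
      ((2 * π)⁻¹ * Real.exp (-((polarCoord.symm p).1 ^ 2 + (polarCoord.symm p).2 ^ 2) / 2) *
        (2 * max 0 (polarCoord.symm p).1 *
          max 0 (ρ * (polarCoord.symm p).1 + Real.sqrt (1 - ρ ^ 2) * (polarCoord.symm p).2))))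
      (fun p : ℝ × ℝ => (p.1 ^ 3 * Real.exp (-(p.1 ^ 2) / 2)) *
        ((2 * π)⁻¹ * (2 * max 0 (Real.cos p.2) * max 0 (Real.cos (p.2 - α)))))
      polarCoord.target := by
    rintro ⟨r, θ⟩ hp
    rw [polarCoord_target] at hp
    have hr : 0 < r := hp.1
    simp only [polarCoord_symm_apply]
    have hsq : (r * Real.cos θ) ^ 2 + (r * Real.sin θ) ^ 2 = r ^ 2 := by
      rw [mul_pow, mul_pow, ← mul_add, Real.cos_sq_add_sin_sq, mul_one]
    have hmax : ∀ x : ℝ, max 0 (r * x) = r * max 0 x := fun x => by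
      rw [mul_max_of_nonneg _ _ hr.le, mul_zero]
    have harg : ρ * (r * Real.cos θ) + Real.sqrt (1 - ρ ^ 2) * (r * Real.sin θ)
        = r * Real.cos (θ - α) := by
      rw [Real.cos_sub, hcos, hsin]; ring
    rw [hsq, harg, hmax, hmax, smul_eq_mul]
    ring
  rw [setIntegral_congr_fun htar hEq, polarCoord_target, Measure.volume_eq_prod,
    ← Measure.prod_restrict,
    integral_prod_mul (μ := volume.restrict (Ioi 0)) (ν := volume.restrict (Ioo (-π) π))
      (f := fun r : ℝ => r ^ 3 * Real.exp (-(r ^ 2) / 2))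
      (g := fun θ : ℝ => (2 * π)⁻¹ * (2 * max 0 (Real.cos θ) * max 0 (Real.cos (θ - α)))),
    radial_int, integral_const_mul,
    angular_int α hα0 hαπ, hsin, hcos]
  have hπ : (π : ℝ) ≠ 0 := pi_ne_zero
  field_simp

/-- Positive homogeneity of the ReLU dual kernel: for a 2×2 PSD matrix with
positive diagonal a, c and off-diagonal b, ψ_σ(Σ) = √(ac)·σ̂(b/√(ac)). -/
theorem psi_sigma_homogeneous (a b c : ℝ) (ha : 0 < a) (hc : 0 < c)
    (hpsd : b ^ 2 ≤ a * c) :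
    ∫ p : ℝ × ℝ,
        nrelu (Real.sqrt a * p.1) *
          nrelu (Real.sqrt c * ((b / Real.sqrt (a * c)) * p.1 +
            Real.sqrt (1 - (b / Real.sqrt (a * c)) ^ 2) * p.2)) ∂stdGauss2
      = Real.sqrt (a * c) * hatSigma (b / Real.sqrt (a * c)) := by
  set ρ := b / Real.sqrt (a * c) with hρ
  have hac : 0 < a * c := mul_pos ha hc
  have hρsq : ρ ^ 2 ≤ 1 := by
    rw [hρ, div_pow, Real.sq_sqrt hac.le, div_le_one hac]
    exact hpsd
  have h1 : -1 ≤ ρ := by nlinarith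
  have h2 : ρ ≤ 1 := by nlinarith
  have hconv : ∀ p : ℝ × ℝ,
      nrelu (Real.sqrt a * p.1) *
        nrelu (Real.sqrt c * (ρ * p.1 + Real.sqrt (1 - ρ ^ 2) * p.2))
      = Real.sqrt (a * c) *
        (nrelu p.1 * nrelu (ρ * p.1 + Real.sqrt (1 - ρ ^ 2) * p.2)) := by
    intro p
    have m1 : max 0 (Real.sqrt a * p.1) = Real.sqrt a * max 0 p.1 := by
      rw [mul_max_of_nonneg _ _ (Real.sqrt_nonneg a), mul_zero]
    have m2 : max 0 (Real.sqrt c * (ρ * p.1 + Real.sqrt (1 - ρ ^ 2) * p.2))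
        = Real.sqrt c * max 0 (ρ * p.1 + Real.sqrt (1 - ρ ^ 2) * p.2) := by
      rw [mul_max_of_nonneg _ _ (Real.sqrt_nonneg c), mul_zero]
    simp only [nrelu, m1, m2]
    rw [Real.sqrt_mul ha.le c]
    ring
  simp_rw [hconv]
  rw [integral_const_mul, key_integral ρ h1 h2, hatSigma]
end

section
/- Let 0 < e < 1 and define e' by 1 − e' = σ̂(1 − e) with σ̂(ρ) = (√(1-ρ²)+(π-arccos ρ)ρ)/π. Then 0 < e' < e, so the sequence e_ℓ defined by e_0 ∈ (0,1) and e_{ℓ} = 1 − σ̂(1 − e_{ℓ-1}) is strictly decreasing and converges to 0, and moreover e_ℓ/e_{ℓ-1} → 1 as ℓ → ∞ (sublinear convergence). -/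
open Real Filter

-- Lemma B: θ cos θ < sin θ on (0, π)
lemma lemB {θ : ℝ} (h0 : 0 < θ) (hπ : θ < π) : θ * Real.cos θ < Real.sin θ := by
  have hmono : StrictMonoOn (fun x : ℝ => Real.sin x - x * Real.cos x) (Set.Icc 0 π) := by
    apply strictMonoOn_of_deriv_pos (convex_Icc 0 π)
    · fun_prop
    · intro x hx
      rw [interior_Icc] at hx
      have hd : HasDerivAt (fun x : ℝ => Real.sin x - x * Real.cos x)
          (Real.cos x - (1 * Real.cos x + x * (-Real.sin x))) x :=
        (Real.hasDerivAt_sin x).sub ((hasDerivAt_id x).mul (Real.hasDerivAt_cos x))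
      rw [hd.deriv]
      have := Real.sin_pos_of_pos_of_lt_pi hx.1 hx.2
      nlinarith [hx.1]
  have := hmono (Set.left_mem_Icc.2 Real.pi_pos.le) ⟨h0.le, hπ.le⟩ h0
  simpa using this

-- Lemma A: sin θ + (π - θ) cos θ < π on (0, π)
lemma lemA {θ : ℝ} (h0 : 0 < θ) (hπ : θ < π) :
    Real.sin θ + (π - θ) * Real.cos θ < π := by
  have hmono : StrictAntiOn (fun x : ℝ => Real.sin x + (π - x) * Real.cos x) (Set.Icc 0 π) := by
    apply strictAntiOn_of_deriv_neg (convex_Icc 0 π)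
    · fun_prop
    · intro x hx
      rw [interior_Icc] at hx
      have hd : HasDerivAt (fun x : ℝ => Real.sin x + (π - x) * Real.cos x)
          (Real.cos x + ((0 - 1) * Real.cos x + (π - x) * (-Real.sin x))) x :=
        (Real.hasDerivAt_sin x).add
          (((hasDerivAt_const x π).sub (hasDerivAt_id x)).mul (Real.hasDerivAt_cos x))
      rw [hd.deriv]
      have := Real.sin_pos_of_pos_of_lt_pi hx.1 hx.2
      nlinarith [hx.2]
  have := hmono (Set.left_mem_Icc.2 Real.pi_pos.le) ⟨h0.le, hπ.le⟩ h0
  simpa using this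

lemma key {e : ℝ} (he : e ∈ Set.Ioo (0:ℝ) 1) :
    0 < 1 - hatSigma (1 - e) ∧ 1 - hatSigma (1 - e) < e ∧
      hatSigma (1 - e) - (1 - e) ≤ Real.arccos (1 - e) * e / π := by
  obtain ⟨he0, he1⟩ := he
  set ρ := 1 - e with hρ
  have hρ1 : ρ < 1 := by simp [hρ]; linarith
  have hρm : -1 < ρ := by simp [hρ]; linarith
  set θ := Real.arccos ρ with hθ
  have hθ0 : 0 < θ := Real.arccos_pos.2 hρ1
  have hθπ : θ < π := lt_of_le_of_ne (Real.arccos_le_pi ρ)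
    (fun h => by have := Real.arccos_eq_pi.1 h; linarith)
  have hcos : Real.cos θ = ρ := Real.cos_arccos hρm.le hρ1.le
  have hsin : Real.sin θ = Real.sqrt (1 - ρ ^ 2) := Real.sin_arccos ρ
  have hval : hatSigma ρ = (Real.sin θ + (π - θ) * Real.cos θ) / π := by
    rw [hatSigma, hsin, hcos]
  have hπpos := Real.pi_pos
  constructor
  · have := lemA hθ0 hθπ
    rw [hval]
    linarith [(div_lt_one hπpos).2 this]
  constructor
  · have hB := lemB hθ0 hθπ
    have : ρ < hatSigma ρ := by
      rw [hval, lt_div_iff₀ hπpos]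
      nlinarith [hcos]
    linarith
  · have hsle : Real.sin θ ≤ θ := Real.sin_le hθ0.le
    have : hatSigma ρ - ρ = (Real.sin θ - θ * Real.cos θ) / π := by
      rw [hval]; field_simp; nlinarith [hcos]
    have he' : e = 1 - Real.cos θ := by rw [hcos]; ring
    rw [this, div_le_div_iff₀ hπpos hπpos, he']
    nlinarith [mul_nonneg (sub_nonneg.2 hsle) hπpos.le]

lemma hatSigma_cont : Continuous hatSigma := by
  unfold hatSigma
  exact (((continuous_const.sub (continuous_pow 2)).sqrt).add
    ((continuous_const.sub Real.continuous_arccos).mul continuous_id)).div_const π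

/-- For e ∈ (0,1), the error map e ↦ 1 - σ̂(1-e) maps into (0,e); consequently
the iterates e_ℓ = 1 - σ̂(1 - e_{ℓ-1}) from e₀ ∈ (0,1) are strictly decreasing,
tend to 0, and satisfy e_ℓ/e_{ℓ-1} → 1 (sublinear convergence). -/
theorem error_iterates_sublinear :
    (∀ e : ℝ, e ∈ Set.Ioo (0 : ℝ) 1 →
      0 < 1 - hatSigma (1 - e) ∧ 1 - hatSigma (1 - e) < e) ∧
    ∀ e : ℕ → ℝ, e 0 ∈ Set.Ioo (0 : ℝ) 1 →
      (∀ n : ℕ, e (n + 1) = 1 - hatSigma (1 - e n)) →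
      StrictAnti e ∧ Tendsto e atTop (nhds 0) ∧
        Tendsto (fun n => e (n + 1) / e n) atTop (nhds 1) := by
  refine ⟨fun e he => ⟨(key he).1, (key he).2.1⟩, fun e he0 hrec => ?_⟩
  -- all iterates in (0,1)
  have hmem : ∀ n, e n ∈ Set.Ioo (0:ℝ) 1 := by
    intro n
    induction n with
    | zero => exact he0
    | succ k ih =>
      have hk := key ih
      rw [hrec k]
      exact ⟨hk.1, hk.2.1.trans ih.2⟩
  have hpos : ∀ n, 0 < e n := fun n => (hmem n).1
  have hdec : ∀ n, e (n + 1) < e n := by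
    intro n
    rw [hrec n]
    exact (key (hmem n)).2.1
  have hanti : StrictAnti e := strictAnti_nat_of_succ_lt hdec
  refine ⟨hanti, ?_⟩
  -- convergence to 0
  have hbdd : BddBelow (Set.range e) := ⟨0, fun x ⟨n, hn⟩ => hn ▸ (hpos n).le⟩
  have hL : Tendsto e atTop (nhds (⨅ n, e n)) :=
    tendsto_atTop_ciInf hanti.antitone hbdd
  set L := ⨅ n, e n with hLdef
  have hL0 : 0 ≤ L := le_ciInf fun n => (hpos n).le
  have hL1 : L < 1 := lt_of_le_of_lt (ciInf_le hbdd 0) he0.2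
  have hLfix : 1 - hatSigma (1 - L) = L := by
    have h1 : Tendsto (fun n => e (n + 1)) atTop (nhds L) :=
      hL.comp (tendsto_add_atTop_nat 1)
    have h2 : Tendsto (fun n => 1 - hatSigma (1 - e n)) atTop
        (nhds (1 - hatSigma (1 - L))) := by
      have : Continuous fun x : ℝ => 1 - hatSigma (1 - x) :=
        continuous_const.sub (hatSigma_cont.comp (continuous_const.sub continuous_id))
      exact (this.tendsto L).comp hL
    have h3 : Tendsto (fun n => 1 - hatSigma (1 - e n)) atTop (nhds L) := by
      simpa only [← hrec] using h1
    exact tendsto_nhds_unique h2 h3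
  have hLzero : L = 0 := by
    by_contra h
    have hLpos : 0 < L := lt_of_le_of_ne hL0 (Ne.symm h)
    have := (key ⟨hLpos, hL1⟩).2.1
    linarith [hLfix]
  rw [hLzero] at hL
  refine ⟨hL, ?_⟩
  -- ratio → 1 by squeeze
  have hupper : ∀ n, e (n + 1) / e n ≤ 1 := fun n =>
    (div_le_one (hpos n)).2 (hdec n).le
  have hlower : ∀ n, 1 - Real.arccos (1 - e n) / π ≤ e (n + 1) / e n := by
    intro n
    have hk := (key (hmem n)).2.2
    have hπ := Real.pi_pos
    rw [hrec n, le_div_iff₀ (hpos n)]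
    have heq : (1 - Real.arccos (1 - e n) / π) * e n
        = e n - Real.arccos (1 - e n) * e n / π := by ring
    linarith [hk, heq]
  have hlowtendsto : Tendsto (fun n => 1 - Real.arccos (1 - e n) / π) atTop (nhds 1) := by
    have hc : Continuous fun x : ℝ => 1 - Real.arccos (1 - x) / π :=
      continuous_const.sub ((Real.continuous_arccos.comp
        (continuous_const.sub continuous_id)).div_const π)
    have := (hc.tendsto 0).comp hL
    simpa [Real.arccos_one, Function.comp_def] using this
  exact tendsto_of_tendsto_of_tendsto_of_le_of_le hlowtendsto tendsto_const_nhds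
    hlower hupper
end
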